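/- arXiv:2209.00537 — 2 statements merged into one kernel-verified Lean document; each statement's English description precedes it below -/
import Mathlib

section
/- Let C be a triangulated category, X, Y, Z full subcategories, and let X*Y denote the class of objects E fitting into a distinguished triangle X → E → Y → X[1] with X ∈ X, Y ∈ Y. Then the operation * is associative: (X*Y)*Z = X*(Y*Z). -/
open CategoryTheory Limits Pretriangulated

/-- For full subcategories (given by classes of objects) `S`, `T` of a triangulated category,
`S * T` is the class of objects `E` fitting into a distinguished triangle
`X → E → Y → X⟦1⟧` with `X ∈ S` and `Y ∈ T`. -/
def triStar {C : Type} [Category C] [HasZeroObject C] [HasShift C ℤ] [Preadditive C]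
    [∀ n : ℤ, (shiftFunctor C n).Additive] [Pretriangulated C]
    (S T : Set C) : Set C :=
  {E | ∃ (X Y : C) (f : X ⟶ E) (g : E ⟶ Y) (h : Y ⟶ X⟦(1 : ℤ)⟧),
    (Triangle.mk f g h ∈ distTriang C) ∧ X ∈ S ∧ Y ∈ T}

set_option maxHeartbeats 1000000 in
/-- If the "shift by 1" of a would-be triangle on `X, B, Y` is distinguished, then there is
a distinguished triangle `X ⟶ B ⟶ Y ⟶ X⟦1⟧`. -/
lemma unshift_dist {C : Type} [Category C] [HasZeroObject C] [HasShift C ℤ] [Preadditive C]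
    [∀ n : ℤ, (shiftFunctor C n).Additive] [Pretriangulated C]
    {X B Y : C} (p : X⟦(1:ℤ)⟧ ⟶ B⟦(1:ℤ)⟧) (q : B⟦(1:ℤ)⟧ ⟶ Y⟦(1:ℤ)⟧)
    (r : Y⟦(1:ℤ)⟧ ⟶ X⟦(1:ℤ)⟧⟦(1:ℤ)⟧) (hd : Triangle.mk p q r ∈ distTriang C) :
    ∃ (p' : X ⟶ B) (q' : B ⟶ Y) (r' : Y ⟶ X⟦(1:ℤ)⟧),
      Triangle.mk p' q' r' ∈ distTriang C := by
  let F := shiftFunctor C (1:ℤ)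
  let T₀ : Triangle C := Triangle.mk (-(F.preimage p)) (-(F.preimage q))
    (F.preimage (-(r ≫ (shiftFunctorComm C 1 1).inv.app X)))
  have h1 : (CategoryTheory.shiftFunctor (Triangle C) (1:ℤ)).obj T₀ ∈ distTriang C := by
    refine isomorphic_distinguished _ hd _ ?_
    refine Triangle.isoMk _ _ (Iso.refl _) (Iso.refl _) (Iso.refl _) ?_ ?_ ?_
    · change (Int.negOnePow 1 • (-(F.preimage p))⟦(1:ℤ)⟧') ≫ 𝟙 _ = 𝟙 _ ≫ p
      dsimp [T₀, F]
      simp only [Int.negOnePow_one, Functor.map_neg, Functor.map_preimage]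
      simp
    · change (Int.negOnePow 1 • (-(F.preimage q))⟦(1:ℤ)⟧') ≫ 𝟙 _ = 𝟙 _ ≫ q
      dsimp [T₀, F]
      simp only [Int.negOnePow_one, Functor.map_neg, Functor.map_preimage]
      simp
    · change (Int.negOnePow 1 • (F.preimage (-(r ≫ (shiftFunctorComm C 1 1).inv.app X)))⟦(1:ℤ)⟧' ≫ (shiftFunctorComm C 1 1).hom.app X) ≫ (𝟙 (X⟦(1:ℤ)⟧))⟦(1:ℤ)⟧' = 𝟙 _ ≫ r
      dsimp [T₀, F]
      simp only [Int.negOnePow_one, Functor.map_neg, Functor.map_preimage]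
      simp
  have h2 := Pretriangulated.Triangle.shift_distinguished _ h1 (-1)
  exact ⟨_, _, _, isomorphic_distinguished _ h2 _
    ((shiftEquiv (Triangle C) (1:ℤ)).unitIso.app T₀)⟩

/-- In a triangulated category, the operation `*` on classes of objects is associative. -/
theorem stmt5 (C : Type) [Category C] [HasZeroObject C] [HasShift C ℤ] [Preadditive C]
    [∀ n : ℤ, (shiftFunctor C n).Additive] [Pretriangulated C] [IsTriangulated C]
    (S T U : Set C) :
    triStar (triStar S T) U = triStar S (triStar T U) := by
  ext E
  constructor
  · rintro ⟨A, Z, f, g, h, hT, ⟨X, Y, a, b, c, hA, hX, hY⟩, hZ⟩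
    obtain ⟨W, v, w, hW⟩ := distinguished_cocone_triangle (a ≫ f)
    have O := Triangulated.someOctahedron rfl hA hT hW
    exact ⟨X, W, a ≫ f, v, w, hW, hX, Y, Z, O.m₁, O.m₃, h ≫ b⟦(1:ℤ)⟧', O.mem, hY, hZ⟩
  · rintro ⟨X, A, f, g, h, hT, hX, ⟨Y, Z, a, b, c, hA, hY, hZ⟩⟩
    obtain ⟨B, i, d, hB⟩ := distinguished_cocone_triangle₁ (g ≫ b)
    have O := Triangulated.someOctahedron rfl (rot_of_distTriang _ hT)
      (rot_of_distTriang _ hA) (rot_of_distTriang _ hB)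
    obtain ⟨p', q', r', hPQ⟩ := unshift_dist O.m₁ O.m₃ _ O.mem
    exact ⟨B, Z, i, g ≫ b, d, hB, ⟨X, Y, p', q', r', hPQ, hX, hY⟩, hZ⟩
end

section
/- Let C be a triangulated category, Q: C → C/N a Verdier quotient functor, and Y an object of C. Define U_Y to be the class of objects X such that the induced map Hom_C(X, Y[i]) → Hom_{C/N}(Q(X), Q(Y)[i]) is bijective for all i ≤ 0 and injective for i = 1. Then U_Y is closed under extensions: if X1 → E → X2 → X1[1] is a distinguished triangle with X1, X2 ∈ U_Y, then E ∈ U_Y. -/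
open CategoryTheory Limits Pretriangulated

namespace CategoryTheory.Triangulated

/-- The structure `Triangulated.Subcategory` of Mathlib (December 2024), restored verbatim. -/
structure Subcategory (C : Type*) [Category C] [HasZeroObject C] [HasShift C ℤ] [Preadditive C]
    [∀ n : ℤ, (shiftFunctor C n).Additive] [Pretriangulated C] where
  P : C → Prop
  zero' : ∃ (Z : C) (_ : IsZero Z), P Z
  shift (X : C) (n : ℤ) : P X → P (X⟦n⟧)
  ext₂' (T : Triangle C) (_ : T ∈ distTriang C) : P T.obj₁ → P T.obj₃ →
    ObjectProperty.isoClosure P T.obj₂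

/-- The class of morphisms whose cone satisfies `S.P` (old `Subcategory.W`). -/
def Subcategory.W {C : Type*} [Category C] [HasZeroObject C] [HasShift C ℤ] [Preadditive C]
    [∀ n : ℤ, (shiftFunctor C n).Additive] [Pretriangulated C] (S : Subcategory C) :
    MorphismProperty C :=
  fun X Y f => ∃ (Z : C) (g : Y ⟶ Z) (h : Z ⟶ X⟦(1 : ℤ)⟧)
    (_ : Triangle.mk f g h ∈ distTriang C), S.P Z

end CategoryTheory.Triangulated

section Aux

variable {C D : Type} [Category C] [Category D]

lemma aux_surj_iso (Q : C ⥤ D) {X Z Z' : C} (e : Z ≅ Z')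
    (hs : Function.Surjective (fun a : X ⟶ Z => Q.map a)) :
    Function.Surjective (fun a : X ⟶ Z' => Q.map a) := by
  intro β
  obtain ⟨a, ha⟩ := hs (β ≫ Q.map e.inv)
  refine ⟨a ≫ e.hom, ?_⟩
  dsimp at ha ⊢
  rw [Q.map_comp, ha, Category.assoc, ← Q.map_comp, e.inv_hom_id, Q.map_id,
    Category.comp_id]

lemma aux_inj_iso (Q : C ⥤ D) {X Z Z' : C} (e : Z ≅ Z')
    (hi : Function.Injective (fun a : X ⟶ Z => Q.map a)) :
    Function.Injective (fun a : X ⟶ Z' => Q.map a) := by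
  intro a b hab
  dsimp at hab
  have : a ≫ e.inv = b ≫ e.inv := hi (by
    dsimp
    rw [Q.map_comp, Q.map_comp, hab])
  have := this =≫ e.hom
  simpa using this

variable [HasShift C ℤ] [HasShift D ℤ]

lemma aux_surj_shift (Q : C ⥤ D) [Q.CommShift ℤ] {X Z : C}
    (hs : Function.Surjective (fun a : X ⟶ Z => Q.map a)) :
    Function.Surjective (fun a : X⟦(1:ℤ)⟧ ⟶ Z⟦(1:ℤ)⟧ => Q.map a) := by
  intro β
  obtain ⟨c, hc⟩ := (shiftFunctor D (1:ℤ)).map_surjective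
    ((Q.commShiftIso (1:ℤ)).inv.app X ≫ β ≫ (Q.commShiftIso (1:ℤ)).hom.app Z)
  obtain ⟨a, ha⟩ := hs c
  refine ⟨a⟦(1:ℤ)⟧', ?_⟩
  dsimp at ha ⊢
  have nat := Q.commShiftIso_hom_naturality a (1:ℤ)
  rw [ha] at nat
  -- nat : Q.map (a⟦1⟧') ≫ hom.app Z = hom.app X ≫ c⟦1⟧'
  rw [hc] at nat
  have := nat =≫ (Q.commShiftIso (1:ℤ)).inv.app Z
  simp only [Category.assoc, Iso.hom_inv_id_app, Functor.comp_obj,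
    Category.comp_id] at this
  rw [this]
  simp

lemma aux_inj_shift (Q : C ⥤ D) [Q.CommShift ℤ] {X Z : C}
    (hi : Function.Injective (fun a : X ⟶ Z => Q.map a)) :
    Function.Injective (fun a : X⟦(1:ℤ)⟧ ⟶ Z⟦(1:ℤ)⟧ => Q.map a) := by
  intro a b hab
  dsimp at hab
  obtain ⟨a', rfl⟩ := (shiftFunctor C (1:ℤ)).map_surjective a
  obtain ⟨b', rfl⟩ := (shiftFunctor C (1:ℤ)).map_surjective b
  have na := Q.commShiftIso_hom_naturality a' (1:ℤ)
  have nb := Q.commShiftIso_hom_naturality b' (1:ℤ)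
  rw [hab, nb] at na
  have heq : (Q.map b')⟦(1:ℤ)⟧' = (Q.map a')⟦(1:ℤ)⟧' := by
    have := ((Q.commShiftIso (1:ℤ)).inv.app X ≫= na)
    simpa [Iso.inv_hom_id_app_assoc] using this
  rw [hi (show (fun a : X ⟶ Z => Q.map a) b' = (fun a : X ⟶ Z => Q.map a) a' from
    (shiftFunctor D (1:ℤ)).map_injective heq)]

end Aux

/-- Closure under extensions of the class `U_Y`, for a Verdier quotient
`Q : C → C/N` of triangulated categories:  `U_Y` consists of the objects `X` such that the
canonical map `Hom_C(X, Y⟦i⟧) → Hom_{C/N}(QX, Q(Y⟦i⟧))` is bijective for `i ≤ 0` and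
injective for `i = 1`. -/
theorem stmt6 (C : Type) [Category C] [HasZeroObject C] [HasShift C ℤ] [Preadditive C]
    [∀ n : ℤ, (shiftFunctor C n).Additive] [Pretriangulated C] [IsTriangulated C]
    (D : Type) [Category D] [HasZeroObject D] [HasShift D ℤ] [Preadditive D]
    [∀ n : ℤ, (shiftFunctor D n).Additive] [Pretriangulated D]
    (N : Triangulated.Subcategory C) [ObjectProperty.IsClosedUnderIsomorphisms N.P]
    (hthick : ∀ X Y : C, N.P (X ⊞ Y) → N.P X)
    (Q : C ⥤ D) [Q.CommShift ℤ] [Q.IsTriangulated] [Q.IsLocalization N.W]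
    (Y : C)
    (U : Set C)
    (hU : U = {X : C | (∀ i : ℤ, i ≤ 0 →
        Function.Bijective (fun f : X ⟶ Y⟦i⟧ => Q.map f)) ∧
      Function.Injective (fun f : X ⟶ Y⟦(1 : ℤ)⟧ => Q.map f)})
    (X₁ E X₂ : C) (f : X₁ ⟶ E) (g : E ⟶ X₂) (h : X₂ ⟶ X₁⟦(1 : ℤ)⟧)
    (hT : Triangle.mk f g h ∈ distTriang C)
    (h₁ : X₁ ∈ U) (h₂ : X₂ ∈ U) :
    E ∈ U := by
  subst hU
  obtain ⟨h₁b, h₁i⟩ := h₁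
  obtain ⟨h₂b, h₂i⟩ := h₂
  have mT := Q.map_distinguished _ hT
  -- injectivity at X₁ and X₂ in all degrees ≤ 1
  have inj₁ : ∀ i : ℤ, i ≤ 1 → Function.Injective (fun a : X₁ ⟶ Y⟦i⟧ => Q.map a) := by
    intro i hi
    rcases hi.lt_or_eq with hi | rfl
    · exact (h₁b i (by omega)).1
    · exact h₁i
  have inj₂ : ∀ i : ℤ, i ≤ 1 → Function.Injective (fun a : X₂ ⟶ Y⟦i⟧ => Q.map a) := by
    intro i hi
    rcases hi.lt_or_eq with hi | rfl
    · exact (h₂b i (by omega)).1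
    · exact h₂i
  -- surjectivity at X₁ after a shift
  have surjShift₁ : ∀ i : ℤ, i ≤ 1 →
      Function.Surjective (fun a : X₁⟦(1:ℤ)⟧ ⟶ Y⟦i⟧ => Q.map a) := by
    intro i hi
    exact aux_surj_iso Q (((shiftFunctorAdd' C (i-1) 1 i (by ring)).app Y).symm)
      (aux_surj_shift Q ((h₁b (i-1) (by omega)).2))
  -- injectivity at X₂ against `(Y⟦i⟧)⟦1⟧` for `i ≤ 0`
  have injShift₂ : ∀ i : ℤ, i ≤ 0 →
      Function.Injective (fun a : X₂ ⟶ (Y⟦i⟧)⟦(1:ℤ)⟧ => Q.map a) := by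
    intro i hi
    exact aux_inj_iso Q ((shiftFunctorAdd' C i 1 (i+1) rfl).app Y)
      (inj₂ (i+1) (by omega))
  -- injectivity at E in all degrees ≤ 1
  have injE : ∀ i : ℤ, i ≤ 1 → Function.Injective (fun e : E ⟶ Y⟦i⟧ => Q.map e) := by
    intro i hi
    suffices hz : ∀ e : E ⟶ Y⟦i⟧, Q.map e = 0 → e = 0 by
      intro a b hab
      dsimp at hab
      rw [← sub_eq_zero]
      exact hz _ (by rw [Q.map_sub, hab, sub_self])
    intro e he
    have h1 : f ≫ e = 0 := inj₁ i hi (by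
      dsimp
      rw [Q.map_comp, he, Limits.comp_zero, Q.map_zero])
    obtain ⟨x, rfl⟩ := Triangle.yoneda_exact₂ _ hT e h1
    change Q.map (g ≫ x) = 0 at he
    change g ≫ x = 0
    have h2 : (Q.mapTriangle.obj (Triangle.mk f g h)).mor₂ ≫ Q.map x = 0 := by
      change Q.map g ≫ Q.map x = 0
      exact (Q.map_comp g x).symm.trans he
    obtain ⟨u, hu⟩ := Triangle.yoneda_exact₃ _ mT (Q.map x) h2
    obtain ⟨v, hv⟩ := surjShift₁ i hi ((Q.commShiftIso (1:ℤ)).hom.app X₁ ≫ u)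
    dsimp at hv
    have h3 : x = h ≫ v := inj₂ i hi (by
      dsimp
      rw [Q.map_comp, hv]
      exact hu.trans (Category.assoc (Q.map h) ((Q.commShiftIso (1:ℤ)).hom.app X₁) u))
    have hz : g ≫ h = 0 := comp_distTriang_mor_zero₂₃ _ hT
    rw [h3, ← Category.assoc, hz, Limits.zero_comp]
  -- surjectivity at E in degrees ≤ 0
  have surjE : ∀ i : ℤ, i ≤ 0 → Function.Surjective (fun e : E ⟶ Y⟦i⟧ => Q.map e) := by
    intro i hi ε
    obtain ⟨a, ha⟩ := (h₁b i hi).2 (Q.map f ≫ ε)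
    dsimp at ha
    -- `h ≫ a⟦1⟧' = 0`
    have key : Q.map (h ≫ a⟦(1:ℤ)⟧') = 0 := by
      have nat := Q.commShiftIso_hom_naturality a (1:ℤ)
      rw [ha] at nat
      have := (Q.map h ≫= nat) =≫ (Q.commShiftIso (1:ℤ)).inv.app (Y⟦i⟧)
      simp only [Category.assoc, Iso.hom_inv_id_app, Functor.comp_obj,
        Category.comp_id] at this
      rw [Q.map_comp, this]
      have z := comp_distTriang_mor_zero₃₁ _ mT
      change (Q.map h ≫ (Q.commShiftIso (1:ℤ)).hom.app X₁) ≫ (Q.map f)⟦(1:ℤ)⟧' = 0 at z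
      rw [Functor.map_comp]
      rw [← Category.assoc, ← Category.assoc]
      rw [Category.assoc (Q.map h)] at z ⊢
      rw [reassoc_of% z]
      simp
    have key2 : h ≫ a⟦(1:ℤ)⟧' = 0 := injShift₂ i hi (by
      dsimp
      rw [key, Q.map_zero])
    have rot := rot_of_distTriang _ hT
    obtain ⟨ψ, hψ⟩ := Triangle.yoneda_exact₃ _ rot (a⟦(1:ℤ)⟧') (by
      dsimp [Triangle.rotate]
      exact key2)
    have hψ' : a⟦(1:ℤ)⟧' =
        (-(f⟦(1:ℤ)⟧')) ≫ (show E⟦(1:ℤ)⟧ ⟶ (Y⟦i⟧)⟦(1:ℤ)⟧ from ψ) := by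
      dsimp [Triangle.rotate] at hψ
      exact hψ
    obtain ⟨ψ₀, hψ₀⟩ := (shiftFunctor C (1:ℤ)).map_surjective
      (show E⟦(1:ℤ)⟧ ⟶ (Y⟦i⟧)⟦(1:ℤ)⟧ from ψ)
    have ha2 : a = f ≫ (-ψ₀) := (shiftFunctor C (1:ℤ)).map_injective (by
      rw [show (shiftFunctor C (1:ℤ)).map a = a⟦(1:ℤ)⟧' from rfl, hψ', ← hψ₀]
      simp)
    have h4 : (Q.mapTriangle.obj (Triangle.mk f g h)).mor₁ ≫ (ε - Q.map (-ψ₀)) = 0 := by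
      change Q.map f ≫ (ε - Q.map (-ψ₀)) = 0
      rw [Preadditive.comp_sub, ← Q.map_comp, ← ha2, ha, sub_self]
    obtain ⟨ξ, hξ⟩ := Triangle.yoneda_exact₂ _ mT (ε - Q.map (-ψ₀)) h4
    obtain ⟨x, hx⟩ := (h₂b i hi).2 ξ
    dsimp at hx
    refine ⟨(-ψ₀) + g ≫ x, ?_⟩
    dsimp
    rw [Q.map_add, Q.map_comp, hx]
    change ε - Q.map (-ψ₀) = Q.map g ≫ ξ at hξ
    rw [← hξ]
    abel
  exact ⟨fun i hi => ⟨injE i (by omega), surjE i hi⟩, injE 1 le_rfl⟩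
end
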